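/- Let δ be a positive integer and e an exact divisor of δ (i.e. e | δ and gcd(e, δ/e) = 1). Let x ∈ GL₂⁺(ℚ). Then x is an Atkin–Lehner element associated to e (an integer matrix [[ae, b],[cδ, de]] of determinant e) if and only if for every prime p dividing e one has x ∈ [[0,−1],[δ,0]]·Λ_p^×, and for every prime p not dividing e one has x ∈ Λ_p^×, where Λ_p = [[ℤ_p, ℤ_p],[δℤ_p, ℤ_p]] and ℤ_p is the localisation of ℤ at p. -/

import Mathlib

/-- Membership in `ℤ_p ⊂ ℚ`, the localisation of `ℤ` at the prime ideal `(p)`. -/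
def inZp (p : ℕ) (x : ℚ) : Prop := ∃ a b : ℤ, ¬ (p : ℤ) ∣ b ∧ x = (a : ℚ) / (b : ℚ)

lemma inZp_iff {p : ℕ} (hp : p.Prime) (x : ℚ) : inZp p x ↔ ¬ p ∣ x.den := by
  constructor
  · rintro ⟨a, b, hb, rfl⟩ hden
    have hb0 : b ≠ 0 := by rintro rfl; exact hb (dvd_zero _)
    have hbQ : (b : ℚ) ≠ 0 := Int.cast_ne_zero.mpr hb0
    set q : ℚ := (a : ℚ) / (b : ℚ) with hq
    have hdQ : ((q.den : ℤ) : ℚ) ≠ 0 := by exact_mod_cast q.den_ne_zero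
    have h1 : ((q.num : ℤ) : ℚ) / ((q.den : ℤ) : ℚ) = (a : ℚ) / (b : ℚ) := by
      push_cast; rw [Rat.num_div_den]
    rw [div_eq_div_iff hdQ hbQ] at h1
    have h2 : q.num * b = a * (q.den : ℤ) := by exact_mod_cast h1
    have hpd : (p : ℤ) ∣ (q.den : ℤ) := Int.natCast_dvd_natCast.mpr hden
    have hpnum : (p : ℤ) ∣ q.num := by
      have hpmul : (p : ℤ) ∣ q.num * b := h2 ▸ hpd.mul_left a
      rcases (Int.prime_iff_natAbs_prime.mpr (by simpa using hp)).dvd_mul.mp hpmul with h | h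
      · exact h
      · exact absurd h hb
    have hpnum' : p ∣ q.num.natAbs := by
      have := Int.natAbs_dvd_natAbs.mpr hpnum
      simpa using this
    have hg : p ∣ Nat.gcd q.num.natAbs q.den := Nat.dvd_gcd hpnum' hden
    rw [q.reduced] at hg
    exact Nat.Prime.one_lt hp |>.ne' (Nat.dvd_one.mp hg)
  · intro h
    exact ⟨x.num, x.den, fun hd => h (Int.natCast_dvd_natCast.mp hd), (Rat.num_div_den x).symm⟩

lemma inZp_mul {p : ℕ} (hp : p.Prime) {x y : ℚ} (hx : inZp p x) (hy : inZp p y) :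
    inZp p (x * y) := by
  rw [inZp_iff hp] at *
  intro hd
  rcases (Nat.Prime.dvd_mul hp).mp (hd.trans (Rat.mul_den_dvd x y)) with h | h
  · exact hx h
  · exact hy h

lemma inZp_add {p : ℕ} (hp : p.Prime) {x y : ℚ} (hx : inZp p x) (hy : inZp p y) :
    inZp p (x + y) := by
  rw [inZp_iff hp] at *
  intro hd
  rcases (Nat.Prime.dvd_mul hp).mp (hd.trans (Rat.add_den_dvd x y)) with h | h
  · exact hx h
  · exact hy h

lemma inZp_neg {p : ℕ} (hp : p.Prime) {x : ℚ} (hx : inZp p x) : inZp p (-x) := by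
  rw [inZp_iff hp] at *
  simpa using hx

lemma inZp_sub {p : ℕ} (hp : p.Prime) {x y : ℚ} (hx : inZp p x) (hy : inZp p y) :
    inZp p (x - y) := by
  rw [sub_eq_add_neg]; exact inZp_add hp hx (inZp_neg hp hy)

lemma inZp_int {p : ℕ} (hp : p.Prime) (n : ℤ) : inZp p (n : ℚ) := by
  rw [inZp_iff hp]
  simp [hp.one_lt.ne']

lemma inZp_nat {p : ℕ} (hp : p.Prime) (n : ℕ) : inZp p (n : ℚ) := by
  exact_mod_cast inZp_int hp (n : ℤ)

lemma inZp_div_nat {p n : ℕ} (hp : p.Prime) (hn : ¬ p ∣ n) {x : ℚ} (hx : inZp p x) :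
    inZp p (x / n) := by
  obtain ⟨a, b, hb, rfl⟩ := hx
  refine ⟨a, b * n, ?_, ?_⟩
  · intro hd
    rcases (Int.prime_iff_natAbs_prime.mpr (by simpa using hp)).dvd_mul.mp hd with h | h
    · exact hb h
    · exact hn (Int.natCast_dvd_natCast.mp h)
  · push_cast; rw [div_div]

lemma inZp_inv_nat {p n : ℕ} (hp : p.Prime) (hn : ¬ p ∣ n) : inZp p ((n : ℚ)⁻¹) := by
  have := inZp_div_nat hp hn (inZp_int hp 1)
  simpa [one_div] using this

lemma eq_int_of_forall_inZp {x : ℚ} (h : ∀ p : ℕ, p.Prime → inZp p x) : ∃ n : ℤ, x = n := by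
  have hden : x.den = 1 := by
    by_contra hne
    obtain ⟨p, hp, hpd⟩ := Nat.exists_prime_and_dvd hne
    exact (inZp_iff hp x).mp (h p hp) hpd
  exact ⟨x.num, by rw [← Rat.num_div_den x, hden]; simp⟩

/-- Membership in the order `Λ_p = [[ℤ_p, ℤ_p], [δℤ_p, ℤ_p]] ⊂ M₂(ℚ)`. -/
def inLambda (p δ : ℕ) (M : Matrix (Fin 2) (Fin 2) ℚ) : Prop :=
  inZp p (M 0 0) ∧ inZp p (M 0 1) ∧ (∃ y : ℚ, inZp p y ∧ M 1 0 = (δ : ℚ) * y) ∧ inZp p (M 1 1)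

/-- Membership in the unit group `Λ_p^×`. -/
def inLambdaUnits (p δ : ℕ) (M : Matrix (Fin 2) (Fin 2) ℚ) : Prop :=
  inLambda p δ M ∧ ∃ N : Matrix (Fin 2) (Fin 2) ℚ, inLambda p δ N ∧ M * N = 1 ∧ N * M = 1

lemma inLambda_det {p δ : ℕ} (hp : p.Prime) {M : Matrix (Fin 2) (Fin 2) ℚ}
    (h : inLambda p δ M) : inZp p M.det := by
  obtain ⟨h00, h01, ⟨y, hy, h10⟩, h11⟩ := h
  rw [Matrix.det_fin_two, h10]
  exact inZp_sub hp (inZp_mul hp h00 h11) (inZp_mul hp h01 (inZp_mul hp (inZp_nat hp δ) hy))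

/-- Local characterization of Atkin–Lehner elements: for `e` an exact divisor of `δ` and
`X ∈ GL₂⁺(ℚ)`, `X` is an Atkin–Lehner element associated to `e` (an integer matrix
`[[ae, b], [cδ, de]]` of determinant `e`) if and only if `X ∈ [[0,−1],[δ,0]]·Λ_p^×` for every
prime `p ∣ e` and `X ∈ Λ_p^×` for every prime `p ∤ e`. -/
theorem stmt_14 (δ e : ℕ) (hδ : 0 < δ) (he : 0 < e) (hdvd : e ∣ δ)
    (hexact : Nat.gcd e (δ / e) = 1)
    (X : Matrix (Fin 2) (Fin 2) ℚ) (hdet : 0 < X.det) :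
    (∃ a b c d : ℤ, X = !![(a : ℚ) * (e : ℚ), (b : ℚ); (c : ℚ) * (δ : ℚ), (d : ℚ) * (e : ℚ)] ∧
        X.det = (e : ℚ)) ↔
      ((∀ p : ℕ, p.Prime → p ∣ e →
          ∃ U : Matrix (Fin 2) (Fin 2) ℚ, inLambdaUnits p δ U ∧
            X = !![0, -1; (δ : ℚ), 0] * U) ∧
        (∀ p : ℕ, p.Prime → ¬ p ∣ e → inLambdaUnits p δ X)) := by
  set m := δ / e with hm_def
  have hmδ : e * m = δ := Nat.mul_div_cancel' hdvd
  have hm0 : 0 < m := Nat.div_pos (Nat.le_of_dvd hδ hdvd) he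
  have heQ : (e : ℚ) ≠ 0 := Nat.cast_ne_zero.mpr he.ne'
  have hδQ : (δ : ℚ) ≠ 0 := Nat.cast_ne_zero.mpr hδ.ne'
  have hmQ : (m : ℚ) ≠ 0 := Nat.cast_ne_zero.mpr hm0.ne'
  have hδeq : (δ : ℚ) = (e : ℚ) * (m : ℚ) := by exact_mod_cast congrArg (Nat.cast (R := ℚ)) hmδ.symm
  have hcop : Nat.Coprime e m := hexact
  constructor
  · rintro ⟨a, b, c, d, rfl, hdetX⟩
    rw [Matrix.det_fin_two_of] at hdetX
    have key : (a : ℚ) * (d : ℚ) * (e : ℚ) - (b : ℚ) * (c : ℚ) * (m : ℚ) = 1 := by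
      apply mul_left_cancel₀ heQ
      rw [mul_one]
      linear_combination hdetX + (b : ℚ) * (c : ℚ) * hδeq
    constructor
    · intro p hp hpe
      have hpm : ¬ p ∣ m := by
        intro h
        have := Nat.dvd_gcd hpe h
        rw [hcop] at this
        exact hp.one_lt.ne' (Nat.dvd_one.mp this)
      refine ⟨!![(c : ℚ), (d : ℚ) / (m : ℚ); -((a : ℚ) * (e : ℚ)), -(b : ℚ)],
        ⟨⟨?_, ?_, ⟨-((a : ℚ) / (m : ℚ)), ?_, ?_⟩, ?_⟩,
          !![-((b : ℚ) * (m : ℚ)), -(d : ℚ); (δ : ℚ) * (a : ℚ), (c : ℚ) * (m : ℚ)],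
          ⟨?_, ?_, ⟨(a : ℚ), inZp_int hp a, ?_⟩, ?_⟩, ?_, ?_⟩, ?_⟩
      · simpa using inZp_int hp c
      · simpa using inZp_div_nat hp hpm (inZp_int hp d)
      · exact inZp_neg hp (inZp_div_nat hp hpm (inZp_int hp a))
      · show -((a : ℚ) * (e : ℚ)) = (δ : ℚ) * -((a : ℚ) / (m : ℚ))
        rw [hδeq]; field_simp
      · simpa using inZp_neg hp (inZp_int hp b)
      · simpa using inZp_neg hp (inZp_mul hp (inZp_int hp b) (inZp_nat hp m))
      · simpa using inZp_neg hp (inZp_int hp d)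
      · simp
      · simpa using inZp_mul hp (inZp_int hp c) (inZp_nat hp m)
      · ext i j
        fin_cases i <;> fin_cases j <;>
          simp [Matrix.mul_apply, Fin.sum_univ_two, Matrix.one_apply] <;>
          (try rw [hδeq]) <;> (try field_simp) <;> (first | ring1 | linear_combination (m : ℚ) * key | linear_combination key | linear_combination (e : ℚ) * key | linear_combination (-(m : ℚ)) * key | linear_combination (-(e : ℚ)) * key | linear_combination (e : ℚ) * (m : ℚ) * key | linear_combination (-((e : ℚ) * (m : ℚ))) * key)
      · ext i j
        fin_cases i <;> fin_cases j <;>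
          simp [Matrix.mul_apply, Fin.sum_univ_two, Matrix.one_apply] <;>
          (try rw [hδeq]) <;> (try field_simp) <;> (first | ring1 | linear_combination (m : ℚ) * key | linear_combination key | linear_combination (e : ℚ) * key | linear_combination (-(m : ℚ)) * key | linear_combination (-(e : ℚ)) * key | linear_combination (e : ℚ) * (m : ℚ) * key | linear_combination (-((e : ℚ) * (m : ℚ))) * key)
      · ext i j
        fin_cases i <;> fin_cases j <;>
          simp [Matrix.mul_apply, Fin.sum_univ_two] <;>
          (try rw [hδeq]) <;> (try field_simp) <;> (try ring)
    · intro p hp hpe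
      refine ⟨⟨?_, ?_, ⟨(c : ℚ), inZp_int hp c, ?_⟩, ?_⟩,
        !![(d : ℚ), -((b : ℚ) / (e : ℚ)); (δ : ℚ) * -((c : ℚ) / (e : ℚ)), (a : ℚ)],
        ⟨?_, ?_, ⟨-((c : ℚ) / (e : ℚ)), ?_, rfl⟩, ?_⟩, ?_, ?_⟩
      · simpa using inZp_mul hp (inZp_int hp a) (inZp_nat hp e)
      · simpa using inZp_int hp b
      · show (c : ℚ) * (δ : ℚ) = (δ : ℚ) * (c : ℚ); ring
      · simpa using inZp_mul hp (inZp_int hp d) (inZp_nat hp e)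
      · simpa using inZp_int hp d
      · simpa using inZp_neg hp (inZp_div_nat hp hpe (inZp_int hp b))
      · exact inZp_neg hp (inZp_div_nat hp hpe (inZp_int hp c))
      · simpa using inZp_int hp a
      · ext i j
        fin_cases i <;> fin_cases j <;>
          simp [Matrix.mul_apply, Fin.sum_univ_two, Matrix.one_apply] <;>
          (try rw [hδeq]) <;> (try field_simp) <;> (first | ring1 | linear_combination (m : ℚ) * key | linear_combination key | linear_combination (e : ℚ) * key | linear_combination (-(m : ℚ)) * key | linear_combination (-(e : ℚ)) * key | linear_combination (e : ℚ) * (m : ℚ) * key | linear_combination (-((e : ℚ) * (m : ℚ))) * key)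
      · ext i j
        fin_cases i <;> fin_cases j <;>
          simp [Matrix.mul_apply, Fin.sum_univ_two, Matrix.one_apply] <;>
          (try rw [hδeq]) <;> (try field_simp) <;> (first | ring1 | linear_combination (m : ℚ) * key | linear_combination key | linear_combination (e : ℚ) * key | linear_combination (-(m : ℚ)) * key | linear_combination (-(e : ℚ)) * key | linear_combination (e : ℚ) * (m : ℚ) * key | linear_combination (-((e : ℚ) * (m : ℚ))) * key)
  · rintro ⟨h1, h2⟩
    have hA : ∀ p : ℕ, p.Prime →
        inZp p (X 0 0 / e) ∧ inZp p (X 0 1) ∧ inZp p (X 1 0 / δ) ∧ inZp p (X 1 1 / e) ∧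
          inZp p (X.det / e) ∧ inZp p ((X.det / e)⁻¹) := by
      intro p hp
      by_cases hpe : p ∣ e
      · obtain ⟨U, ⟨⟨hU00, hU01, ⟨w, hw, hU10⟩, hU11⟩, V, hVΛ, hUV, hVU⟩, hXWU⟩ := h1 p hp hpe
        have hpm : ¬ p ∣ m := by
          intro h
          have := Nat.dvd_gcd hpe h
          rw [hcop] at this
          exact hp.one_lt.ne' (Nat.dvd_one.mp this)
        have e00 : X 0 0 = -(U 1 0) := by rw [hXWU]; simp [Matrix.mul_apply, Fin.sum_univ_two]
        have e01 : X 0 1 = -(U 1 1) := by rw [hXWU]; simp [Matrix.mul_apply, Fin.sum_univ_two]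
        have e10 : X 1 0 = (δ : ℚ) * U 0 0 := by
          rw [hXWU]; simp [Matrix.mul_apply, Fin.sum_univ_two]
        have e11 : X 1 1 = (δ : ℚ) * U 0 1 := by
          rw [hXWU]; simp [Matrix.mul_apply, Fin.sum_univ_two]
        have hdX : X.det = (δ : ℚ) * U.det := by
          rw [hXWU, Matrix.det_mul, Matrix.det_fin_two_of]; ring
        have hUdet : inZp p U.det := inLambda_det hp ⟨hU00, hU01, ⟨w, hw, hU10⟩, hU11⟩
        have hVdet : inZp p V.det := inLambda_det hp hVΛ
        have hUVdet : U.det * V.det = 1 := by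
          have := congrArg Matrix.det hUV
          rwa [Matrix.det_mul, Matrix.det_one] at this
        refine ⟨?_, ?_, ?_, ?_, ?_, ?_⟩
        · have h : X 0 0 / e = -((m : ℚ) * w) := by
            rw [e00, hU10, hδeq]; field_simp
          rw [h]; exact inZp_neg hp (inZp_mul hp (inZp_nat hp m) hw)
        · rw [e01]; exact inZp_neg hp hU11
        · have h : X 1 0 / δ = U 0 0 := by rw [e10]; field_simp
          rw [h]; exact hU00
        · have h : X 1 1 / e = (m : ℚ) * U 0 1 := by rw [e11, hδeq]; field_simp
          rw [h]; exact inZp_mul hp (inZp_nat hp m) hU01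
        · have h : X.det / e = (m : ℚ) * U.det := by rw [hdX, hδeq]; field_simp
          rw [h]; exact inZp_mul hp (inZp_nat hp m) hUdet
        · have h : X.det / e * (V.det * (m : ℚ)⁻¹) = 1 := by
            rw [hdX, hδeq]; field_simp; linear_combination hUVdet
          rw [inv_eq_of_mul_eq_one_right h]
          exact inZp_mul hp hVdet (inZp_inv_nat hp hpm)
      · obtain ⟨⟨h00, h01, ⟨y, hy, h10⟩, h11⟩, N, hNΛ, hXN, hNX⟩ := h2 p hp hpe
        have hXNdet : X.det * N.det = 1 := by
          have := congrArg Matrix.det hXN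
          rwa [Matrix.det_mul, Matrix.det_one] at this
        refine ⟨inZp_div_nat hp hpe h00, h01, ?_, inZp_div_nat hp hpe h11,
          inZp_div_nat hp hpe (inLambda_det hp ⟨h00, h01, ⟨y, hy, h10⟩, h11⟩), ?_⟩
        · have h : X 1 0 / δ = y := by rw [h10]; field_simp
          rw [h]; exact hy
        · have h : X.det / e * ((e : ℚ) * N.det) = 1 := by
            field_simp; linear_combination hXNdet
          rw [inv_eq_of_mul_eq_one_right h]
          exact inZp_mul hp (inZp_nat hp e) (inLambda_det hp hNΛ)
    obtain ⟨a, ha⟩ := eq_int_of_forall_inZp (fun p hp => (hA p hp).1)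
    obtain ⟨b, hb⟩ := eq_int_of_forall_inZp (fun p hp => (hA p hp).2.1)
    obtain ⟨c, hc⟩ := eq_int_of_forall_inZp (fun p hp => (hA p hp).2.2.1)
    obtain ⟨d, hd⟩ := eq_int_of_forall_inZp (fun p hp => (hA p hp).2.2.2.1)
    obtain ⟨n, hn⟩ := eq_int_of_forall_inZp (fun p hp => (hA p hp).2.2.2.2.1)
    obtain ⟨k, hk⟩ := eq_int_of_forall_inZp (fun p hp => (hA p hp).2.2.2.2.2)
    have hr0 : X.det / e ≠ 0 := div_ne_zero hdet.ne' heQ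
    have hnk : (n : ℚ) * (k : ℚ) = 1 := by rw [← hn, ← hk]; exact mul_inv_cancel₀ hr0
    have hnkZ : n * k = 1 := by exact_mod_cast hnk
    have hn0 : 0 < n := by
      have h : (0 : ℚ) < (n : ℚ) := by rw [← hn]; positivity
      exact_mod_cast h
    have hn1 : n = 1 := by
      rcases Int.isUnit_iff.mp (IsUnit.of_mul_eq_one (a := n) k hnkZ) with h | h
      · exact h
      · omega
    have hdetE : X.det = (e : ℚ) := by
      have h : X.det / e = 1 := by rw [hn, hn1]; norm_num
      field_simp at h
      exact h
    refine ⟨a, b, c, d, ?_, hdetE⟩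
    have ea : X 0 0 = (a : ℚ) * e := (div_eq_iff heQ).mp ha
    have ec : X 1 0 = (c : ℚ) * δ := (div_eq_iff hδQ).mp hc
    have ed : X 1 1 = (d : ℚ) * e := (div_eq_iff heQ).mp hd
    ext i j
    fin_cases i <;> fin_cases j
    · simpa using ea
    · simpa using hb
    · simpa using ec
    · simpa using ed
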